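/- (SMF achievability induction step) Suppose Q(t−1) ≤ T·C(k₁)·μ(t−1) where k₁ = S(t−1), and set s(t) = C(k₁)·μ(t−1) − Q(t−1)/T ≥ 0. If μ(t) = μ(t−1)·x with x ≥ X_min^{k₁} > 0, and the constants satisfy C(k₁)/X_min^{k₁} − 1 ≤ C(k₂) for all k₂ ∈ S, then Q(t) = (T·C(k₁)·μ(t−1) − T·μ(t))⁺ ≤ T·C(k₂)·μ(t) for every possible next state k₂ = S(t). -/

import Mathlib

/-- SMF achievability induction step: if `Qprev ≤ T·C(k₁)·μprev`,
`s = C(k₁)·μprev − Qprev/T ≥ 0`, `μ = μprev·x` with `x ≥ Xmin k₁ > 0`, and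
`C(k₁)/Xmin(k₁) − 1 ≤ C(k₂)` for all `k₂`, then
`Qnext = (T·C(k₁)·μprev − T·μ)⁺ ≤ T·C(k₂)·μ` for every `k₂`. -/
theorem stmt_14 {S : Type*} (C Xmin : S → ℝ) (k₁ : S)
    (hC_pos : ∀ k, 0 < C k) (hXmin_pos : 0 < Xmin k₁)
    (T μprev μ x Qprev s : ℝ)
    (hT : 0 < T) (hμprev : 0 < μprev)
    (hQprev_nonneg : 0 ≤ Qprev) (hQprev : Qprev ≤ T * C k₁ * μprev)
    (hs : s = C k₁ * μprev - Qprev / T) (hs_nonneg : 0 ≤ s)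
    (hμ : μ = μprev * x) (hx : Xmin k₁ ≤ x)
    (hCbound : ∀ k₂ : S, C k₁ / Xmin k₁ - 1 ≤ C k₂) :
    max (Qprev + s * T - μ * T) 0 = max (T * C k₁ * μprev - T * μ) 0
    ∧ ∀ k₂ : S, max (T * C k₁ * μprev - T * μ) 0 ≤ T * C k₂ * μ := by
  have hx0 : 0 < x := lt_of_lt_of_le hXmin_pos hx
  have hμ0 : 0 < μ := by rw [hμ]; positivity
  constructor
  · have : Qprev + s * T = T * C k₁ * μprev := by
      rw [hs]; field_simp; ring
    rw [← this, mul_comm μ T]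
  · intro k₂
    have hμpos : 0 ≤ T * C k₂ * μ := by
      have := hC_pos k₂; positivity
    apply max_le _ hμpos
    have h1 : C k₁ ≤ (C k₂ + 1) * Xmin k₁ := by
      have := hCbound k₂
      rw [div_sub' (ne_of_gt hXmin_pos), div_le_iff₀ hXmin_pos] at this
      nlinarith
    have h2 : (C k₂ + 1) * Xmin k₁ ≤ (C k₂ + 1) * x := by
      have := hC_pos k₂; nlinarith
    have : C k₁ * μprev ≤ (C k₂ + 1) * μ := by
      rw [hμ]; nlinarith [h1.trans h2]
    nlinarith
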